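/- With the notation of the purely intermediated market scheme (ρ_i, E^bau_i, ρ = Σρ_i, E^bau = ΣE^bau_i, 0 < A, τ = (E^bau − A)/ρ, S = (E^bau − 2A)/ρ, P_i = (S + E^bau_i/ρ_i)/2, E^mar_i = E^bau_i − P_iρ_i), define GDP^tax = W^tax_C + W^tax_R and GDP^mar = W^mar_C + W^mar_F + W^mar_R, where W^tax_C, W^mar_C are the aggregate optimal company wealths under the tax and market schemes, W^mar_F = Σ_i (E^mar_i)²/ρ_i is the aggregate intermediary wealth, W^tax_R = τA and W^mar_R = SA. Then: (i) GDP^mar = GDP^tax + (1/2)(A²/ρ − Σ_i (E^mar_i)²/ρ_i) ≤ GDP^tax; (ii) W^mar_C + W^mar_R = W^tax_C + W^tax_R + (3/2)(A²/ρ − Σ_i (E^mar_i)²/ρ_i) − A²/ρ < W^tax_C + W^tax_R. -/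

import Mathlib

/-- Under the purely intermediated market scheme, with
`GDP^tax = W^tax_C + W^tax_R` and `GDP^mar = W^mar_C + W^mar_F + W^mar_R`:
(i) `GDP^mar = GDP^tax + (1/2)(A²/ρ − Σ_i (E^mar_i)²/ρ_i) ≤ GDP^tax`;
(ii) `W^mar_C + W^mar_R = W^tax_C + W^tax_R
      + (3/2)(A²/ρ − Σ_i (E^mar_i)²/ρ_i) − A²/ρ < W^tax_C + W^tax_R`. -/
theorem intermediated_market_gdp_comparison
    {ι : Type*} [Fintype ι] [Nonempty ι]
    (π0 π1 γ : ι → ℝ)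
    (hπ0 : ∀ i, 0 < π0 i) (hπ1 : ∀ i, 0 < π1 i) (hγ : ∀ i, 0 < γ i)
    (ρ Ebau W : ι → ℝ)
    (hρ : ∀ i, ρ i = 1 / π1 i + 1 / γ i)
    (hEbau : ∀ i, Ebau i = π0 i / π1 i)
    (hW : ∀ i, W i = (π0 i) ^ 2 / (2 * π1 i))
    (ρtot Etot : ℝ) (hρtot : ρtot = ∑ i, ρ i) (hEtot : Etot = ∑ i, Ebau i)
    (A : ℝ) (hA : 0 < A)
    (τ S : ℝ) (hτ : τ = (Etot - A) / ρtot) (hS : S = (Etot - 2 * A) / ρtot)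
    (P Emar : ι → ℝ)
    (hP : ∀ i, P i = (S + Ebau i / ρ i) / 2)
    (hEmar : ∀ i, Emar i = Ebau i - P i * ρ i)
    (WtaxC WmarC WmarF WtaxR WmarR GDPtax GDPmar : ℝ)
    (hWtaxC : WtaxC = ∑ i, (W i - τ * (Ebau i - τ / 2 * ρ i)))
    (hWmarC : WmarC = ∑ i, (W i - P i * (Ebau i - P i / 2 * ρ i)))
    (hWmarF : WmarF = ∑ i, (Emar i) ^ 2 / ρ i)
    (hWtaxR : WtaxR = τ * A) (hWmarR : WmarR = S * A)
    (hGDPtax : GDPtax = WtaxC + WtaxR)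
    (hGDPmar : GDPmar = WmarC + WmarF + WmarR) :
    GDPmar = GDPtax + 1 / 2 * (A ^ 2 / ρtot - ∑ i, (Emar i) ^ 2 / ρ i) ∧
    GDPmar ≤ GDPtax ∧
    WmarC + WmarR
      = WtaxC + WtaxR + 3 / 2 * (A ^ 2 / ρtot - ∑ i, (Emar i) ^ 2 / ρ i)
        - A ^ 2 / ρtot ∧
    WmarC + WmarR < WtaxC + WtaxR := by
  have hρpos : ∀ i, 0 < ρ i := fun i => by
    have h1 := hπ1 i; have h2 := hγ i
    rw [hρ i]; positivity
  have hρne : ∀ i, ρ i ≠ 0 := fun i => (hρpos i).ne'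
  have hρtotpos : 0 < ρtot := by
    rw [hρtot]; exact Finset.sum_pos (fun i _ => hρpos i) Finset.univ_nonempty
  have hρtotne : ρtot ≠ 0 := hρtotpos.ne'
  have hEmar' : ∀ i, Emar i = (Ebau i - S * ρ i) / 2 := fun i => by
    have hr := hρne i
    rw [hEmar i, hP i]; field_simp; ring
  have hEmarSum : ∑ i, Emar i = A := by
    have h0 : ∑ i, Emar i = ∑ i, (Ebau i - S * ρ i) / 2 :=
      Finset.sum_congr rfl fun i _ => hEmar' i
    rw [h0, ← Finset.sum_div, Finset.sum_sub_distrib, ← Finset.mul_sum,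
      ← hρtot, ← hEtot, hS]
    field_simp
    ring
  have hkey : ∀ i,
      (W i - P i * (Ebau i - P i / 2 * ρ i)) + 3 / 2 * ((Emar i) ^ 2 / ρ i)
        - (W i - τ * (Ebau i - τ / 2 * ρ i))
      = S ^ 2 * ρ i / 2 - S * Ebau i + τ * Ebau i - τ ^ 2 * ρ i / 2 := by
    intro i
    have hr := hρne i
    rw [hEmar' i, hP i]
    field_simp
    ring
  have hagg : WmarC + 3 / 2 * WmarF - WtaxC = 3 / 2 * (A ^ 2 / ρtot) := by
    have h1 : WmarC + 3 / 2 * WmarF - WtaxC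
        = ∑ i, ((W i - P i * (Ebau i - P i / 2 * ρ i))
            + 3 / 2 * ((Emar i) ^ 2 / ρ i)
            - (W i - τ * (Ebau i - τ / 2 * ρ i))) := by
      rw [hWmarC, hWmarF, hWtaxC, Finset.mul_sum, ← Finset.sum_add_distrib,
        ← Finset.sum_sub_distrib]
    rw [h1, Finset.sum_congr rfl fun i _ => hkey i]
    have h3 : ∑ i, (S ^ 2 * ρ i / 2 - S * Ebau i + τ * Ebau i - τ ^ 2 * ρ i / 2)
        = S ^ 2 * ρtot / 2 - S * Etot + τ * Etot - τ ^ 2 * ρtot / 2 := by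
      rw [hρtot, hEtot]
      simp only [Finset.mul_sum, Finset.sum_div, ← Finset.sum_sub_distrib,
        ← Finset.sum_add_distrib]
    rw [h3, hS, hτ]
    field_simp
    ring
  have hCS : A ^ 2 / ρtot ≤ WmarF := by
    rw [hWmarF, ← hEmarSum, hρtot]
    exact Finset.sq_sum_div_le_sum_sq_div _ _ (fun i _ => hρpos i)
  have hSA : S * A = τ * A - A ^ 2 / ρtot := by
    rw [hS, hτ]
    field_simp
    ring
  have hApos : 0 < A ^ 2 / ρtot := by positivity
  refine ⟨?_, ?_, ?_, ?_⟩
  · rw [hGDPmar, hGDPtax, hWmarR, hWtaxR, ← hWmarF]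
    linarith [hagg, hSA]
  · rw [hGDPmar, hGDPtax, hWmarR, hWtaxR]
    linarith [hagg, hSA, hCS]
  · rw [hWmarR, hWtaxR, ← hWmarF]
    linarith [hagg, hSA]
  · rw [hWmarR, hWtaxR]
    linarith [hagg, hSA, hCS, hApos]
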